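/- The cobracket δ(α_1⊗…⊗α_n) = Σ_{j=1}^{n-1} [α_{[1,j]} ⊗ α_{[j+1,n]} - (-1)^{dg(α_{[1,j]})dg(α_{[j+1,n]})} α_{[j+1,n]} ⊗ α_{[1,j]}] on the tensor space of a graded vector space satisfies the graded co-Jacobi identity: (id^{⊗3} + τ₁₂∘τ₂₃ + τ₂₃∘τ₁₂) ∘ (δ⊗id) ∘ δ = 0, where τ is the graded flip, τ₁₂ = τ⊗id, τ₂₃ = id⊗τ. -/

import Mathlib

/-- Words with letters in `ι`: homogeneous tensors `α₁ ⊗ … ⊗ αₙ`. -/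
def Word (ι : Type*) := Σ n : ℕ, Fin n → ι

noncomputable section

/-- Degree of a word: the sum of the degrees of its letters. -/
def wdeg {ι : Type*} (deg : ι → ℤ) (w : Word ι) : ℤ := ∑ i, deg (w.2 i)

/-- The first `j` letters of a word. -/
def takeW {ι : Type*} (w : Word ι) (j : ℕ) : Word ι :=
  ⟨min j w.1, fun i => w.2 (Fin.castLE (min_le_right j w.1) i)⟩

/-- The word with its first `j` letters removed. -/
def dropW {ι : Type*} (w : Word ι) (j : ℕ) : Word ι :=
  ⟨w.1 - j, fun i => w.2 ⟨j + i, by have := i.isLt; omega⟩⟩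

/-- The deconcatenation cobracket
`δ(X) = Σ_{j=1}^{n-1} (α_{[1,j]} ⊗ α_{[j+1,n]}
        - (-1)^{dg(α_{[1,j]})dg(α_{[j+1,n]})} α_{[j+1,n]} ⊗ α_{[1,j]})`. -/
def deltaW {ι : Type*} (deg : ι → ℤ) (w : Word ι) : (Word ι × Word ι) →₀ ℚ :=
  ∑ j ∈ Finset.Ico 1 w.1,
    (Finsupp.single (takeW w j, dropW w j) (1 : ℚ)
      - ((-1 : ℚ) ^ (wdeg deg (takeW w j) * wdeg deg (dropW w j))) •
          Finsupp.single (dropW w j, takeW w j) (1 : ℚ))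

/-- `δ ⊗ id` applied to a linear combination of pairs of words. -/
def deltaFstW {ι : Type*} (deg : ι → ℤ) (f : (Word ι × Word ι) →₀ ℚ) :
    (Word ι × Word ι × Word ι) →₀ ℚ :=
  f.sum fun p c =>
    c • ((deltaW deg p.1).sum fun q e => e • Finsupp.single (q.1, q.2, p.2) (1 : ℚ))

/-- `τ₁₂ = τ ⊗ id` on triples, where `τ` is the graded flip. -/
def tau12W {ι : Type*} (deg : ι → ℤ) (f : (Word ι × Word ι × Word ι) →₀ ℚ) :
    (Word ι × Word ι × Word ι) →₀ ℚ :=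
  f.sum fun t c =>
    (((-1 : ℚ) ^ (wdeg deg t.1 * wdeg deg t.2.1)) * c) •
      Finsupp.single (t.2.1, t.1, t.2.2) (1 : ℚ)

/-- `τ₂₃ = id ⊗ τ` on triples, where `τ` is the graded flip. -/
def tau23W {ι : Type*} (deg : ι → ℤ) (f : (Word ι × Word ι × Word ι) →₀ ℚ) :
    (Word ι × Word ι × Word ι) →₀ ℚ :=
  f.sum fun t c =>
    (((-1 : ℚ) ^ (wdeg deg t.2.1 * wdeg deg t.2.2)) * c) •
      Finsupp.single (t.1, t.2.2, t.2.1) (1 : ℚ)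

namespace CoJacAux

variable {ι : Type*}

lemma wordExt {v w : Word ι} (h : v.1 = w.1)
    (h2 : ∀ (i : Fin v.1) (j : Fin w.1), (i:ℕ) = (j:ℕ) → v.2 i = w.2 j) : v = w := by
  obtain ⟨n, f⟩ := v; obtain ⟨m, g⟩ := w
  dsimp at h; subst h
  have : f = g := funext fun i => h2 i i rfl
  rw [this]

lemma letter_congr (w : Word ι) {a b : Fin w.1} (h : (a:ℕ) = (b:ℕ)) : w.2 a = w.2 b :=
  congrArg w.2 (Fin.ext h)

lemma take_take {w : Word ι} {i j : ℕ} (hij : i ≤ j) :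
    takeW (takeW w j) i = takeW w i := by
  apply wordExt
  · simp only [takeW]; omega
  · intro a b hab
    exact letter_congr w (by exact hab)

lemma drop_take {w : Word ι} {j k : ℕ} (hjk : j ≤ k) :
    dropW (takeW w k) j = takeW (dropW w j) (k - j) := by
  apply wordExt
  · simp only [takeW, dropW]; omega
  · intro a b hab
    exact letter_congr w (by show j + (a:ℕ) = j + (b:ℕ); omega)

lemma drop_drop (w : Word ι) (j m : ℕ) :
    dropW (dropW w j) m = dropW w (j + m) := by
  apply wordExt
  · simp only [dropW]; omega
  · intro a b hab
    exact letter_congr w (by simp [dropW] at hab ⊢; omega)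

variable (deg : ι → ℤ)

lemma wdeg_eq_range (v : Word ι) :
    wdeg deg v = ∑ x ∈ Finset.range v.1,
      (if h : x < v.1 then deg (v.2 ⟨x, h⟩) else 0) := by
  rw [wdeg, ← Fin.sum_univ_eq_sum_range (fun x => if h : x < v.1 then deg (v.2 ⟨x, h⟩) else 0)]
  exact Finset.sum_congr rfl fun i _ => by simp [i.isLt]

lemma wdeg_take_add_drop (v : Word ι) {m : ℕ} (hm : m ≤ v.1) :
    wdeg deg (takeW v m) + wdeg deg (dropW v m) = wdeg deg v := by
  set F : ℕ → ℤ := fun x => if h : x < v.1 then deg (v.2 ⟨x, h⟩) else 0 with hF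
  have hmin : (takeW v m).1 = m := by simp only [takeW]; omega
  have h1 : wdeg deg (takeW v m) = ∑ x ∈ Finset.range m, F x := by
    rw [wdeg_eq_range]
    refine Finset.sum_congr (congrArg Finset.range hmin) fun x hx => ?_
    have hx' : x < m := Finset.mem_range.mp hx
    have hx1 : x < (takeW v m).1 := by omega
    have hx2 : x < v.1 := lt_of_lt_of_le hx' hm
    rw [dif_pos hx1, hF]
    simp only [dif_pos hx2]
    exact congrArg deg (congrArg v.2 (Fin.ext (by simp [takeW])))
  have h2 : wdeg deg (dropW v m) = ∑ x ∈ Finset.range (v.1 - m), F (m + x) := by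
    rw [wdeg_eq_range]
    refine Finset.sum_congr rfl fun x hx => ?_
    have hx' : x < v.1 - m := Finset.mem_range.mp hx
    have hx2 : m + x < v.1 := by omega
    rw [dif_pos (show x < (dropW v m).1 from hx'), hF]
    simp only [dif_pos hx2]
    exact congrArg deg (congrArg v.2 (Fin.ext (by simp [dropW])))
  rw [h1, h2, wdeg_eq_range, ← hF, ← Finset.sum_Ico_eq_sum_range, Finset.range_eq_Ico]
  exact (Finset.sum_Ico_consecutive F (Nat.zero_le m) hm).trans (by rw [Finset.range_eq_Ico])

abbrev T3 (ι : Type*) := Word ι × Word ι × Word ι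

def extL (C : Word ι) : ((Word ι × Word ι) →₀ ℚ) →ₗ[ℚ] (T3 ι →₀ ℚ) :=
  Finsupp.lsum ℚ fun q => LinearMap.toSpanSingleton ℚ _ (Finsupp.single (q.1, q.2, C) (1:ℚ))

def dFL : ((Word ι × Word ι) →₀ ℚ) →ₗ[ℚ] (T3 ι →₀ ℚ) :=
  Finsupp.lsum ℚ fun p => LinearMap.toSpanSingleton ℚ _ (extL p.2 (deltaW deg p.1))

def tau12L : (T3 ι →₀ ℚ) →ₗ[ℚ] (T3 ι →₀ ℚ) :=
  Finsupp.lsum ℚ fun t => LinearMap.toSpanSingleton ℚ _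
    (Finsupp.single (t.2.1, t.1, t.2.2) ((-1:ℚ)^(wdeg deg t.1 * wdeg deg t.2.1)))

def tau23L : (T3 ι →₀ ℚ) →ₗ[ℚ] (T3 ι →₀ ℚ) :=
  Finsupp.lsum ℚ fun t => LinearMap.toSpanSingleton ℚ _
    (Finsupp.single (t.1, t.2.2, t.2.1) ((-1:ℚ)^(wdeg deg t.2.1 * wdeg deg t.2.2)))

lemma extL_apply (C : Word ι) (f : (Word ι × Word ι) →₀ ℚ) :
    extL C f = f.sum fun q e => e • Finsupp.single (q.1, q.2, C) (1:ℚ) := by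
  rw [extL, Finsupp.lsum_apply]
  exact Finsupp.sum_congr fun q _ => rfl

lemma deltaFstW_eq (f : (Word ι × Word ι) →₀ ℚ) : deltaFstW deg f = dFL deg f := by
  rw [deltaFstW, dFL, Finsupp.lsum_apply]
  exact Finsupp.sum_congr fun p _ => by rw [LinearMap.toSpanSingleton_apply, extL_apply]

lemma tau12W_eq (f : T3 ι →₀ ℚ) : tau12W deg f = tau12L deg f := by
  rw [tau12W, tau12L, Finsupp.lsum_apply]
  refine Finsupp.sum_congr fun t _ => ?_
  rw [LinearMap.toSpanSingleton_apply, Finsupp.smul_single', Finsupp.smul_single', mul_one,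
    mul_comm]

lemma tau23W_eq (f : T3 ι →₀ ℚ) : tau23W deg f = tau23L deg f := by
  rw [tau23W, tau23L, Finsupp.lsum_apply]
  refine Finsupp.sum_congr fun t _ => ?_
  rw [LinearMap.toSpanSingleton_apply, Finsupp.smul_single', Finsupp.smul_single', mul_one,
    mul_comm]

lemma extL_single (C : Word ι) (q : Word ι × Word ι) (c : ℚ) :
    extL C (Finsupp.single q c) = Finsupp.single (q.1, q.2, C) c := by
  rw [extL, Finsupp.lsum_single, LinearMap.toSpanSingleton_apply, Finsupp.smul_single', mul_one]

lemma dFL_single (p : Word ι × Word ι) (c : ℚ) :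
    dFL deg (Finsupp.single p c) = c • extL p.2 (deltaW deg p.1) := by
  rw [dFL, Finsupp.lsum_single, LinearMap.toSpanSingleton_apply]

lemma tau12L_single (t : T3 ι) (c : ℚ) :
    tau12L deg (Finsupp.single t c)
      = Finsupp.single (t.2.1, t.1, t.2.2) ((-1:ℚ)^(wdeg deg t.1 * wdeg deg t.2.1) * c) := by
  simp [tau12L, Finsupp.smul_single', mul_comm]

lemma tau23L_single (t : T3 ι) (c : ℚ) :
    tau23L deg (Finsupp.single t c)
      = Finsupp.single (t.1, t.2.2, t.2.1) ((-1:ℚ)^(wdeg deg t.2.1 * wdeg deg t.2.2) * c) := by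
  simp [tau23L, Finsupp.smul_single', mul_comm]

lemma neg_one_zpow_cases (n : ℤ) : ((-1:ℚ))^n = 1 ∨ ((-1:ℚ))^n = -1 := by
  rcases Int.even_or_odd n with ⟨k, hk⟩ | ⟨k, hk⟩
  · left; rw [hk, ← two_mul, zpow_mul]; norm_num
  · right; rw [hk, zpow_add₀ (by norm_num : (-1:ℚ) ≠ 0), zpow_mul]; norm_num

/-- The per-split combination of four basis triples. -/
def QQ (A B C : Word ι) : T3 ι →₀ ℚ :=
  Finsupp.single (A,B,C) (1:ℚ)
    - Finsupp.single (B,A,C) ((-1:ℚ)^(wdeg deg A * wdeg deg B))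
    - Finsupp.single (B,C,A) ((-1:ℚ)^(wdeg deg A * wdeg deg B + wdeg deg A * wdeg deg C))
    + Finsupp.single (C,B,A)
        ((-1:ℚ)^(wdeg deg A * wdeg deg B + wdeg deg A * wdeg deg C + wdeg deg B * wdeg deg C))

set_option maxRecDepth 8000 in
lemma keyQ (A B C : Word ι) :
    QQ deg A B C + tau12L deg (tau23L deg (QQ deg A B C))
      + tau23L deg (tau12L deg (QQ deg A B C)) = 0 := by
  set a := wdeg deg A with ha
  set b := wdeg deg B with hb
  set c := wdeg deg C with hc
  have hsplit : ∀ x y : ℤ, ((-1:ℚ))^(x+y) = (-1:ℚ)^x * (-1:ℚ)^y :=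
    fun x y => zpow_add₀ (by norm_num) x y
  have hba : ((-1:ℚ))^(b*a) = ((-1:ℚ))^(a*b) := by rw [mul_comm]
  have hca : ((-1:ℚ))^(c*a) = ((-1:ℚ))^(a*c) := by rw [mul_comm]
  have hcb : ((-1:ℚ))^(c*b) = ((-1:ℚ))^(b*c) := by rw [mul_comm]
  simp only [QQ, map_sub, map_add, tau23L_single, tau12L_single, hsplit, hba, hca, hcb]
  rcases neg_one_zpow_cases (a*b) with h1|h1 <;>
  rcases neg_one_zpow_cases (a*c) with h2|h2 <;>
  rcases neg_one_zpow_cases (b*c) with h3|h3 <;>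
  simp only [← ha, ← hb, ← hc, hba, hca, hcb, h1, h2, h3] <;>
  · norm_num [Finsupp.single_neg]
    try abel

/-- First-part split term. -/
def PP (A B C : Word ι) : T3 ι →₀ ℚ :=
  Finsupp.single (A,B,C) (1:ℚ)
    - ((-1:ℚ)^(wdeg deg A * wdeg deg B)) • Finsupp.single (B,A,C) (1:ℚ)

/-- Second-part split term. -/
def GG (A B C : Word ι) : T3 ι →₀ ℚ :=
  ((-1:ℚ)^(wdeg deg A * (wdeg deg B + wdeg deg C))) •
    (Finsupp.single (B,C,A) (1:ℚ)
      - ((-1:ℚ)^(wdeg deg B * wdeg deg C)) • Finsupp.single (C,B,A) (1:ℚ))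

lemma PsubG (A B C : Word ι) : PP deg A B C - GG deg A B C = QQ deg A B C := by
  have hsplit : ∀ x y : ℤ, (-1:ℚ)^x * (-1:ℚ)^y = ((-1:ℚ))^(x+y) :=
    fun x y => (zpow_add₀ (by norm_num) x y).symm
  simp only [PP, GG, QQ, smul_sub, smul_smul, Finsupp.smul_single', mul_one, mul_add, hsplit]
  abel

lemma reindex {M : Type*} [AddCommMonoid M] (n : ℕ) (g : ℕ → ℕ → M) :
    ∑ j ∈ Finset.Ico 1 n, ∑ m ∈ Finset.Ico 1 (n - j), g j (j + m)
      = ∑ j ∈ Finset.Ico 1 n, ∑ i ∈ Finset.Ico 1 j, g i j := by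
  rw [Finset.sum_sigma', Finset.sum_sigma']
  refine Finset.sum_nbij' (fun p => (⟨p.1 + p.2, p.1⟩ : Σ _ : ℕ, ℕ))
    (fun p => (⟨p.2, p.1 - p.2⟩ : Σ _ : ℕ, ℕ)) ?_ ?_ ?_ ?_ ?_
  · rintro ⟨x, y⟩ hp
    simp [Finset.mem_sigma, Finset.mem_Ico] at hp ⊢
    omega
  · rintro ⟨x, y⟩ hp
    simp [Finset.mem_sigma, Finset.mem_Ico] at hp ⊢
    omega
  · rintro ⟨x, y⟩ hp
    simp [Finset.mem_sigma, Finset.mem_Ico] at hp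
    have hxy : x + y - x = y := by omega
    simp [hxy]
  · rintro ⟨x, y⟩ hp
    simp [Finset.mem_sigma, Finset.mem_Ico] at hp
    have hxy : y + (x - y) = x := by omega
    simp [hxy]
  · rintro ⟨x, y⟩ _
    rfl

end CoJacAux


/-- the deconcatenation cobracket satisfies the graded co-Jacobi
identity: `(id^{⊗3} + τ₁₂∘τ₂₃ + τ₂₃∘τ₁₂) ∘ (δ⊗id) ∘ δ = 0`. -/
theorem cobracket_coJacobi {ι : Type*} (deg : ι → ℤ) (w : Word ι) :
    deltaFstW deg (deltaW deg w)
      + tau12W deg (tau23W deg (deltaFstW deg (deltaW deg w)))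
      + tau23W deg (tau12W deg (deltaFstW deg (deltaW deg w))) = 0 := by
  classical
  have hδ : deltaW deg w = ∑ j ∈ Finset.Ico 1 w.1,
      (Finsupp.single (takeW w j, dropW w j) (1:ℚ)
        - ((-1:ℚ)^(wdeg deg (takeW w j) * wdeg deg (dropW w j))) •
            Finsupp.single (dropW w j, takeW w j) (1:ℚ)) := rfl
  have step1 : ∀ j ∈ Finset.Ico 1 w.1,
      CoJacAux.dFL deg (Finsupp.single (takeW w j, dropW w j) (1:ℚ)
          - ((-1:ℚ)^(wdeg deg (takeW w j) * wdeg deg (dropW w j))) •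
              Finsupp.single (dropW w j, takeW w j) (1:ℚ))
        = (∑ i ∈ Finset.Ico 1 j,
            CoJacAux.PP deg (takeW w i) (takeW (dropW w i) (j - i)) (dropW w j))
          - ∑ m ∈ Finset.Ico 1 (w.1 - j),
              CoJacAux.GG deg (takeW w j) (takeW (dropW w j) (j + m - j)) (dropW w (j + m)) := by
    intro j hj
    obtain ⟨hj1, hj2⟩ := Finset.mem_Ico.mp hj
    simp only [map_sub, map_smul, CoJacAux.dFL_single, one_smul]
    try dsimp only
    congr 1
    · have h1 : deltaW deg (takeW w j)
          = ∑ i ∈ Finset.Ico 1 j,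
              (Finsupp.single (takeW w i, takeW (dropW w i) (j - i)) (1:ℚ)
                - ((-1:ℚ)^(wdeg deg (takeW w i) * wdeg deg (takeW (dropW w i) (j - i)))) •
                    Finsupp.single (takeW (dropW w i) (j - i), takeW w i) (1:ℚ)) := by
        rw [deltaW]
        have hlen : (takeW w j).1 = j := by simp only [takeW]; omega
        rw [hlen]
        refine Finset.sum_congr rfl fun i hi => ?_
        obtain ⟨hi1, hi2⟩ := Finset.mem_Ico.mp hi
        rw [CoJacAux.take_take hi2.le, CoJacAux.drop_take hi2.le]
      rw [h1, map_sum]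
      refine Finset.sum_congr rfl fun i hi => ?_
      rw [map_sub, map_smul, CoJacAux.extL_single, CoJacAux.extL_single, CoJacAux.PP]
    · have h2 : deltaW deg (dropW w j)
          = ∑ m ∈ Finset.Ico 1 (w.1 - j),
              (Finsupp.single (takeW (dropW w j) m, dropW w (j + m)) (1:ℚ)
                - ((-1:ℚ)^(wdeg deg (takeW (dropW w j) m) * wdeg deg (dropW w (j + m)))) •
                    Finsupp.single (dropW w (j + m), takeW (dropW w j) m) (1:ℚ)) := by
        rw [deltaW]
        have hlen : (dropW w j).1 = w.1 - j := rfl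
        rw [hlen]
        refine Finset.sum_congr rfl fun m hm => ?_
        rw [CoJacAux.drop_drop]
      rw [h2, map_sum, Finset.smul_sum]
      refine Finset.sum_congr rfl fun m hm => ?_
      obtain ⟨hm1, hm2⟩ := Finset.mem_Ico.mp hm
      rw [map_sub, map_smul, CoJacAux.extL_single, CoJacAux.extL_single]
      try dsimp only
      have hspl : wdeg deg (dropW w j)
          = wdeg deg (takeW (dropW w j) m) + wdeg deg (dropW w (j + m)) := by
        rw [← CoJacAux.wdeg_take_add_drop deg (dropW w j)
            (show m ≤ (dropW w j).1 from by simp only [dropW]; omega),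
          CoJacAux.drop_drop]
      rw [hspl, CoJacAux.GG, Nat.add_sub_cancel_left]
  have main : CoJacAux.dFL deg (deltaW deg w)
      = ∑ j ∈ Finset.Ico 1 w.1, ∑ i ∈ Finset.Ico 1 j,
          CoJacAux.QQ deg (takeW w i) (takeW (dropW w i) (j - i)) (dropW w j) := by
    rw [hδ, map_sum, Finset.sum_congr rfl step1, Finset.sum_sub_distrib]
    have hre := CoJacAux.reindex w.1
      (fun i k => CoJacAux.GG deg (takeW w i) (takeW (dropW w i) (k - i)) (dropW w k))
    beta_reduce at hre
    rw [hre, ← Finset.sum_sub_distrib]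
    refine Finset.sum_congr rfl fun j hj => ?_
    rw [← Finset.sum_sub_distrib]
    exact Finset.sum_congr rfl fun i hi => CoJacAux.PsubG deg _ _ _
  simp only [CoJacAux.deltaFstW_eq, CoJacAux.tau12W_eq, CoJacAux.tau23W_eq, main, map_sum]
  rw [← Finset.sum_add_distrib, ← Finset.sum_add_distrib]
  refine Finset.sum_eq_zero fun j hj => ?_
  rw [← Finset.sum_add_distrib, ← Finset.sum_add_distrib]
  exact Finset.sum_eq_zero fun i hi => CoJacAux.keyQ deg _ _ _
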